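/- For a plane sector S_θ of opening θ ∈ (0, π), the bottom of the spectrum of the Robin Laplacian on S_θ (Friedrichs extension of u ↦ ‖∇u‖²_{L²(S_θ)} − ‖u‖²_{L²(∂S_θ)}) satisfies E(S_θ) ≤ −sin^{−2}(θ/2), as can be shown by testing with u(x₁,x₂) = exp(−x₁/sin(θ/2)) in coordinates where S_θ = {(x₁,x₂) : |x₂| < x₁ tan(θ/2)}. -/

import Mathlib

open MeasureTheory

section RobinSectorAuxSec

open Set Filter Topology

namespace RobinSectorAux


lemma exp_int_Ioi {b : ℝ} (hb : 0 < b) :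
    ∫ x in Ioi (0:ℝ), Real.exp (-(b * x)) = b⁻¹ := by
  have hderiv : ∀ x ∈ Ici (0:ℝ), HasDerivAt (fun x => -b⁻¹ * Real.exp (-(b * x)))
      (Real.exp (-(b * x))) x := by
    intro x _
    have h1 : HasDerivAt (fun x : ℝ => -(b * x)) (-b) x := by
      have h : HasDerivAt (fun x : ℝ => -(b * x)) (-(b * 1)) x := ((hasDerivAt_id x).const_mul b).neg
      simpa using h
    have h2 := (h1.exp).const_mul (-b⁻¹)
    convert h2 using 1
    · rfl
    · rfl
    field_simp
  have hint : IntegrableOn (fun x => Real.exp (-(b * x))) (Ioi (0:ℝ)) := by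
    simpa [neg_mul] using exp_neg_integrableOn_Ioi 0 hb
  have htend : Tendsto (fun x => -b⁻¹ * Real.exp (-(b * x))) atTop (𝓝 0) := by
    have h0 : Tendsto (fun x : ℝ => b * x) atTop atTop :=
      Tendsto.const_mul_atTop hb tendsto_id
    have h2 : Tendsto (fun x : ℝ => Real.exp (-(b * x))) atTop (𝓝 0) :=
      Real.tendsto_exp_neg_atTop_nhds_zero.comp h0
    simpa using h2.const_mul (-b⁻¹)
  rw [integral_Ioi_of_hasDerivAt_of_tendsto' hderiv hint htend]
  simp

lemma xexp_antideriv {b : ℝ} (hb : 0 < b) (x : ℝ) :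
    HasDerivAt (fun x => -(b⁻¹ * x + b⁻¹ ^ 2) * Real.exp (-(b * x)))
      (x * Real.exp (-(b * x))) x := by
  have h1 : HasDerivAt (fun x : ℝ => -(b⁻¹ * x + b⁻¹ ^ 2)) (-b⁻¹) x := by
    have h : HasDerivAt (fun x : ℝ => -(b⁻¹ * x + b⁻¹ ^ 2)) (-(b⁻¹ * 1)) x :=
      (((hasDerivAt_id x).const_mul b⁻¹).add_const (b⁻¹ ^ 2)).neg
    convert h using 1
    norm_num
  have h2 : HasDerivAt (fun x : ℝ => Real.exp (-(b * x))) (Real.exp (-(b * x)) * (-b)) x := by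
    have : HasDerivAt (fun x : ℝ => -(b * x)) (-b) x := by
      have h : HasDerivAt (fun x : ℝ => -(b * x)) (-(b * 1)) x := ((hasDerivAt_id x).const_mul b).neg
      simpa using h
    exact this.exp
  have := h1.mul h2
  convert this using 1
  · rfl
  · rfl
  · rfl
  have hbne : b ≠ 0 := hb.ne'
  field_simp
  ring

lemma xexp_tendsto {b : ℝ} (hb : 0 < b) :
    Tendsto (fun x => -(b⁻¹ * x + b⁻¹ ^ 2) * Real.exp (-(b * x))) atTop (𝓝 0) := by
  have h0 : Tendsto (fun x : ℝ => b * x) atTop atTop :=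
    Tendsto.const_mul_atTop hb tendsto_id
  have h1 : Tendsto (fun y : ℝ => -(b⁻¹ ^ 2) * (y * Real.exp (-y) + Real.exp (-y)))
      atTop (𝓝 (-(b⁻¹ ^ 2) * (0 + 0))) := by
    refine Tendsto.const_mul _ (Tendsto.add ?_ Real.tendsto_exp_neg_atTop_nhds_zero)
    simpa using Real.tendsto_pow_mul_exp_neg_atTop_nhds_zero 1
  have h2 := h1.comp h0
  simp only [mul_zero, add_zero] at h1 h2
  refine h2.congr fun x => ?_
  have hbne : b ≠ 0 := hb.ne'
  simp only [Function.comp_apply]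
  field_simp

lemma xexp_integrableOn {b : ℝ} (hb : 0 < b) :
    IntegrableOn (fun x => x * Real.exp (-(b * x))) (Ioi (0:ℝ)) :=
  integrableOn_Ioi_deriv_of_nonneg' (fun x _ => xexp_antideriv hb x)
    (fun x hx => mul_nonneg (le_of_lt hx) (Real.exp_pos _).le) (xexp_tendsto hb)

lemma xexp_integral {b : ℝ} (hb : 0 < b) :
    ∫ x in Ioi (0:ℝ), x * Real.exp (-(b * x)) = b⁻¹ ^ 2 := by
  rw [integral_Ioi_of_hasDerivAt_of_tendsto' (fun x _ => xexp_antideriv hb x)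
    (xexp_integrableOn hb) (xexp_tendsto hb)]
  simp



lemma trace_one_dim {f : ℝ → ℝ} (hf : Differentiable ℝ f) {a ε : ℝ} (hε : 0 < ε)
    (h2 : IntegrableOn (fun x => f x ^ 2) (Ioi a))
    (h2' : IntegrableOn (fun x => deriv f x ^ 2) (Ioi a)) :
    f a ^ 2 ≤ ∫ x in Ioi a, (ε⁻¹ * f x ^ 2 + ε * deriv f x ^ 2) := by
  have hBint : IntegrableOn (fun x => ε⁻¹ * f x ^ 2 + ε * deriv f x ^ 2) (Ioi a) :=
    (h2.const_mul _).add (h2'.const_mul _)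
  have hbound : ∀ x, |2 * f x * deriv f x| ≤ ε⁻¹ * f x ^ 2 + ε * deriv f x ^ 2 := by
    intro x
    have hεε : ε * ε⁻¹ = 1 := mul_inv_cancel₀ hε.ne'
    have k1 := mul_nonneg (inv_pos.2 hε).le (sq_nonneg (f x - ε * deriv f x))
    have k2 := mul_nonneg (inv_pos.2 hε).le (sq_nonneg (f x + ε * deriv f x))
    rw [abs_le]
    constructor <;> nlinarith [k1, k2, hεε]
  have hfm : Measurable f := hf.continuous.measurable
  have hprodmeas : AEStronglyMeasurable (fun x => 2 * f x * deriv f x)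
      (volume.restrict (Ioi a)) :=
    (((hfm.const_mul 2).mul (measurable_deriv f)).aestronglyMeasurable).restrict
  have hint : IntegrableOn (fun x => 2 * f x * deriv f x) (Ioi a) :=
    hBint.mono' hprodmeas (ae_of_all _ fun x => by
      rw [Real.norm_eq_abs]; exact hbound x)
  have hasd : ∀ x : ℝ, HasDerivAt (fun y => f y ^ 2) (2 * f x * deriv f x) x := by
    intro x
    have h : HasDerivAt (fun y => f y ^ 2) (((2:ℕ):ℝ) * f x ^ (2 - 1) * deriv f x) x :=
      ((hf x).hasDerivAt).pow 2
    simpa [pow_one, mul_comm, mul_assoc] using h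
  have hFTC : ∀ X, a ≤ X → f X ^ 2 = f a ^ 2 + ∫ x in a..X, 2 * f x * deriv f x := by
    intro X hX
    have hii : IntervalIntegrable (fun x => 2 * f x * deriv f x) volume a X := by
      rw [intervalIntegrable_iff_integrableOn_Ioc_of_le hX]
      exact hint.mono_set Ioc_subset_Ioi_self
    have h := intervalIntegral.integral_eq_sub_of_hasDerivAt (fun x _ => hasd x) hii
    linarith [h]
  set I := ∫ x in Ioi a, 2 * f x * deriv f x with hI
  have htendI : Tendsto (fun X => ∫ x in a..X, 2 * f x * deriv f x) atTop (𝓝 I) :=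
    intervalIntegral_tendsto_integral_Ioi a hint tendsto_id
  have htendg : Tendsto (fun X => f X ^ 2) atTop (𝓝 (f a ^ 2 + I)) := by
    refine (htendI.const_add (f a ^ 2)).congr' ?_
    filter_upwards [eventually_ge_atTop a] with X hX
    exact (hFTC X hX).symm
  have hL0 : f a ^ 2 + I = 0 := by
    by_contra hne
    have hge : 0 ≤ f a ^ 2 + I := ge_of_tendsto' htendg fun X => sq_nonneg (f X)
    have hpos : 0 < f a ^ 2 + I := lt_of_le_of_ne hge (Ne.symm hne)
    obtain ⟨M, hM⟩ := eventually_atTop.mp (htendg.eventually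
      (eventually_gt_nhds (show (f a ^ 2 + I) / 2 < f a ^ 2 + I by linarith)))
    have hconst : IntegrableOn (fun _ : ℝ => (f a ^ 2 + I) / 2) (Ioi (max a M)) := by
      refine Integrable.mono' (h2.mono_set (Ioi_subset_Ioi (le_max_left a M)))
        aestronglyMeasurable_const ?_
      refine (ae_restrict_iff' measurableSet_Ioi).2 (ae_of_all _ fun x hx => ?_)
      have hx' := hM x (le_of_lt (lt_of_le_of_lt (le_max_right a M) hx))
      rw [Real.norm_eq_abs, abs_of_pos (by linarith)]
      linarith
    rw [integrableOn_const_iff] at hconst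
    rcases hconst with h | h
    · have h' : (f a ^ 2 + I) / 2 = 0 := by simpa using h
      linarith
    · rw [Real.volume_Ioi] at h
      exact absurd h (lt_irrefl _)
  have hfa : f a ^ 2 = -I := by linarith
  rw [hfa]
  have hneg : -I = ∫ x in Ioi a, -(2 * f x * deriv f x) := (integral_neg _).symm
  rw [hneg]
  refine integral_mono hint.neg hBint fun x => ?_
  have h1 := hbound x
  have h2 := neg_abs_le (2 * f x * deriv f x)
  simp only [Pi.neg_apply]
  linarith



lemma sector_exp {t k : ℝ} (ht : 0 < t) (hk : 0 < k) :
    IntegrableOn (fun p : ℝ × ℝ => Real.exp (-(k * p.1)))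
      {p : ℝ × ℝ | 0 < p.1 ∧ |p.2| < p.1 * t} ∧
    ∫ p in {p : ℝ × ℝ | 0 < p.1 ∧ |p.2| < p.1 * t}, Real.exp (-(k * p.1))
      = 2 * t * k⁻¹ ^ 2 := by
  set S : Set (ℝ × ℝ) := {p : ℝ × ℝ | 0 < p.1 ∧ |p.2| < p.1 * t} with hSdef
  have hSmeas : MeasurableSet S :=
    (measurableSet_lt measurable_const measurable_fst).inter
      (measurableSet_lt measurable_snd.abs (measurable_fst.mul_const t))
  set F : ℝ × ℝ → ℝ := S.indicator (fun p => Real.exp (-(k * p.1))) with hFdef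
  have hFmeas : Measurable F :=
    (Real.measurable_exp.comp ((measurable_fst.const_mul k).neg)).indicator hSmeas
  have hslice : ∀ x : ℝ, (fun y => F (x, y)) =
      (Ioo (-(x * t)) (x * t)).indicator (fun _ => Real.exp (-(k * x))) := by
    intro x; funext y
    rw [hFdef]
    by_cases h : (x, y) ∈ S
    · have h2 := h.2
      rw [Set.indicator_of_mem h,
        Set.indicator_of_mem (show y ∈ Ioo (-(x * t)) (x * t) from abs_lt.1 h2)]
    · rw [Set.indicator_of_notMem h, Set.indicator_of_notMem]
      intro hy
      rcases mem_Ioo.1 hy with ⟨hy1, hy2⟩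
      have hx : 0 < x := by nlinarith [ht]
      exact h ⟨hx, abs_lt.2 ⟨hy1, hy2⟩⟩
  have hinner : ∀ x : ℝ, (∫ y, F (x, y)) =
      (Ioi (0:ℝ)).indicator (fun x => 2 * t * (x * Real.exp (-(k * x)))) x := by
    intro x
    rw [hslice x]
    rcases le_or_gt x 0 with hx | hx
    · have hempty : Ioo (-(x * t)) (x * t) = ∅ := Ioo_eq_empty (by nlinarith)
      rw [hempty]
      simp [Set.indicator_of_notMem (notMem_Ioi.2 hx)]
    · rw [integral_indicator measurableSet_Ioo, setIntegral_const, smul_eq_mul,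
        Real.volume_real_Ioo, Set.indicator_of_mem (mem_Ioi.mpr hx),
        max_eq_left (by nlinarith : (0:ℝ) ≤ x * t - -(x * t))]
      ring
  have hG : Integrable ((Ioi (0:ℝ)).indicator (fun x => 2 * t * (x * Real.exp (-(k * x))))) := by
    rw [integrable_indicator_iff measurableSet_Ioi]
    exact (xexp_integrableOn hk).const_mul (2 * t)
  have hFint : Integrable F := by
    rw [Measure.volume_eq_prod]
    refine (integrable_prod_iff hFmeas.aestronglyMeasurable).2 ⟨?_, ?_⟩
    · refine ae_of_all _ fun x => ?_
      rw [hslice x, integrable_indicator_iff measurableSet_Ioo]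
      exact integrableOn_const measure_Ioo_lt_top.ne
    · have heq : (fun x => ∫ y, ‖F (x, y)‖) = fun x => ∫ y, F (x, y) := by
        funext x; congr 1; funext y
        rw [Real.norm_eq_abs, abs_of_nonneg]
        exact Set.indicator_nonneg (fun p _ => (Real.exp_pos _).le) _
      rw [heq]
      exact hG.congr (ae_of_all _ fun x => (hinner x).symm)
  have hFint' : Integrable F (volume.prod volume) := by
    rwa [Measure.volume_eq_prod] at hFint
  have hval : ∫ p, F p = 2 * t * k⁻¹ ^ 2 := by
    have h1 : ∫ p, F p = ∫ x, ∫ y, F (x, y) := by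
      rw [Measure.volume_eq_prod]; exact integral_prod F hFint'
    rw [h1]
    have h2 : (fun x => ∫ y, F (x, y)) =
        (Ioi (0:ℝ)).indicator (fun x => 2 * t * (x * Real.exp (-(k * x)))) := funext hinner
    rw [h2, integral_indicator measurableSet_Ioi, integral_const_mul, xexp_integral hk]
  constructor
  · exact (integrable_indicator_iff hSmeas).1 hFint
  · rw [← integral_indicator hSmeas]
    exact hval



theorem robin_aux (s c t : ℝ) (hs : 0 < s) (hc : 0 < c) (ht : 0 < t) (hct : c * t = s) :
    sInf {r : ℝ | ∃ u ∈ {u : ℝ × ℝ → ℝ | Differentiable ℝ u ∧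
      IntegrableOn (fun p => (u p) ^ 2) {p : ℝ × ℝ | 0 < p.1 ∧ |p.2| < p.1 * t} ∧
      IntegrableOn (fun p => ‖fderiv ℝ u p‖ ^ 2) {p : ℝ × ℝ | 0 < p.1 ∧ |p.2| < p.1 * t} ∧
      IntegrableOn (fun x => (u (x, x * t)) ^ 2) (Set.Ioi 0) ∧
      IntegrableOn (fun x => (u (x, -(x * t))) ^ 2) (Set.Ioi 0)},
      0 < (∫ p in {p : ℝ × ℝ | 0 < p.1 ∧ |p.2| < p.1 * t}, (u p) ^ 2) ∧
      r = ((∫ p in {p : ℝ × ℝ | 0 < p.1 ∧ |p.2| < p.1 * t}, ‖fderiv ℝ u p‖ ^ 2) -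
        c⁻¹ * ((∫ x in Set.Ioi (0:ℝ), (u (x, x * t)) ^ 2) +
          ∫ x in Set.Ioi (0:ℝ), (u (x, -(x * t))) ^ 2)) /
        (∫ p in {p : ℝ × ℝ | 0 < p.1 ∧ |p.2| < p.1 * t}, (u p) ^ 2)}
      ≤ -(s ^ 2)⁻¹ := by
  set S : Set (ℝ × ℝ) := {p : ℝ × ℝ | 0 < p.1 ∧ |p.2| < p.1 * t} with hSdef
  have hSmeas : MeasurableSet S :=
    (measurableSet_lt measurable_const measurable_fst).inter
      (measurableSet_lt measurable_snd.abs (measurable_fst.mul_const t))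
  have hslice_set : ∀ y : ℝ, {x : ℝ | (x, y) ∈ S} = Ioi (|y| / t) := by
    intro y; ext x
    simp only [hSdef, mem_setOf_eq, mem_Ioi]
    constructor
    · rintro ⟨h1, h2⟩
      exact (div_lt_iff₀ ht).2 h2
    · intro h
      have h0 : (0:ℝ) ≤ |y| / t := div_nonneg (abs_nonneg y) ht.le
      exact ⟨lt_of_le_of_lt h0 h, (div_lt_iff₀ ht).1 h⟩
  have hk : 0 < 2 * s⁻¹ := by positivity
  obtain ⟨hsecInt, hsecVal⟩ := sector_exp ht hk
  -- the test function
  set u₀ : ℝ × ℝ → ℝ := fun p => Real.exp (-(s⁻¹ * p.1)) with hu₀def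
  have hu₀sq : ∀ p : ℝ × ℝ, u₀ p ^ 2 = Real.exp (-(2 * s⁻¹ * p.1)) := by
    intro p
    rw [hu₀def, sq, ← Real.exp_add]
    congr 1; ring
  have hu₀fd : ∀ p : ℝ × ℝ,
      HasFDerivAt u₀ ((u₀ p * (-s⁻¹)) • (ContinuousLinearMap.fst ℝ ℝ ℝ)) p := by
    intro p
    have h1 : HasFDerivAt (fun q : ℝ × ℝ => -(s⁻¹ * q.1))
        ((-s⁻¹) • (ContinuousLinearMap.fst ℝ ℝ ℝ)) p := by
      have h0 : HasFDerivAt (fun q : ℝ × ℝ => q.1) (ContinuousLinearMap.fst ℝ ℝ ℝ) p :=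
        hasFDerivAt_fst
      exact (h0.const_smul (-s⁻¹)).congr_of_eventuallyEq
        (Filter.Eventually.of_forall fun q => by show -(s⁻¹ * q.1) = -s⁻¹ • q.1; rw [smul_eq_mul, neg_mul])
    have h2 := h1.exp
    have heq : Real.exp (-(s⁻¹ * p.1)) • ((-s⁻¹) • (ContinuousLinearMap.fst ℝ ℝ ℝ))
        = (u₀ p * (-s⁻¹)) • (ContinuousLinearMap.fst ℝ ℝ ℝ) := smul_smul _ _ _
    exact heq ▸ h2
  have hu₀diff : Differentiable ℝ u₀ := fun p => (hu₀fd p).differentiableAt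
  have hu₀norm : ∀ p, ‖fderiv ℝ u₀ p‖ ^ 2 = s⁻¹ ^ 2 * Real.exp (-(2 * s⁻¹ * p.1)) := by
    intro p
    rw [(hu₀fd p).fderiv, norm_smul]
    rw [ContinuousLinearMap.norm_fst, mul_one, Real.norm_eq_abs, abs_mul,
      abs_of_pos (Real.exp_pos _), abs_neg, abs_of_pos (inv_pos.2 hs)]
    have hsq : Real.exp (-(s⁻¹ * p.1)) ^ 2 = Real.exp (-(2 * s⁻¹ * p.1)) := by
      rw [sq, ← Real.exp_add]; congr 1; ring
    rw [mul_pow, hsq]; ring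
  -- integrability and values for the test function
  have hIl2 : IntegrableOn (fun p : ℝ × ℝ => u₀ p ^ 2) S :=
    hsecInt.congr (ae_of_all _ fun p => (hu₀sq p).symm)
  have hl2val : ∫ p in S, u₀ p ^ 2 = 2 * t * (2 * s⁻¹)⁻¹ ^ 2 := by
    rw [show (fun p : ℝ × ℝ => u₀ p ^ 2) = fun p => Real.exp (-(2 * s⁻¹ * p.1)) from
      funext hu₀sq]
    exact hsecVal
  have hIgrad : IntegrableOn (fun p : ℝ × ℝ => ‖fderiv ℝ u₀ p‖ ^ 2) S :=
    (hsecInt.const_mul (s⁻¹ ^ 2)).congr (ae_of_all _ fun p => (hu₀norm p).symm)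
  have hgradval : ∫ p in S, ‖fderiv ℝ u₀ p‖ ^ 2 = s⁻¹ ^ 2 * (2 * t * (2 * s⁻¹)⁻¹ ^ 2) := by
    rw [show (fun p : ℝ × ℝ => ‖fderiv ℝ u₀ p‖ ^ 2) =
      fun p => s⁻¹ ^ 2 * Real.exp (-(2 * s⁻¹ * p.1)) from funext hu₀norm]
    rw [integral_const_mul, hsecVal]
  have hexpint : IntegrableOn (fun x : ℝ => Real.exp (-(2 * s⁻¹ * x))) (Ioi (0:ℝ)) := by
    simpa [neg_mul] using exp_neg_integrableOn_Ioi 0 hk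
  have hIbp : IntegrableOn (fun x => u₀ (x, x * t) ^ 2) (Ioi (0:ℝ)) :=
    hexpint.congr (ae_of_all _ fun x => (hu₀sq (x, x * t)).symm)
  have hIbm : IntegrableOn (fun x => u₀ (x, -(x * t)) ^ 2) (Ioi (0:ℝ)) :=
    hexpint.congr (ae_of_all _ fun x => (hu₀sq (x, -(x * t))).symm)
  have hbpval : ∫ x in Ioi (0:ℝ), u₀ (x, x * t) ^ 2 = (2 * s⁻¹)⁻¹ := by
    rw [show (fun x : ℝ => u₀ (x, x * t) ^ 2) = fun x => Real.exp (-(2 * s⁻¹ * x)) from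
      funext fun x => hu₀sq (x, x * t)]
    exact exp_int_Ioi hk
  have hbmval : ∫ x in Ioi (0:ℝ), u₀ (x, -(x * t)) ^ 2 = (2 * s⁻¹)⁻¹ := by
    rw [show (fun x : ℝ => u₀ (x, -(x * t)) ^ 2) = fun x => Real.exp (-(2 * s⁻¹ * x)) from
      funext fun x => hu₀sq (x, -(x * t))]
    exact exp_int_Ioi hk
  have hl2pos : 0 < ∫ p in S, u₀ p ^ 2 := by
    rw [hl2val]; positivity
  have hrval : ((∫ p in S, ‖fderiv ℝ u₀ p‖ ^ 2) -
      c⁻¹ * ((∫ x in Ioi (0:ℝ), u₀ (x, x * t) ^ 2) +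
        ∫ x in Ioi (0:ℝ), u₀ (x, -(x * t)) ^ 2)) / (∫ p in S, u₀ p ^ 2) = -(s ^ 2)⁻¹ := by
    rw [hl2val, hgradval, hbpval]
    rw [div_eq_iff (by positivity : (2 * t * (2 * s⁻¹)⁻¹ ^ 2) ≠ 0)]
    field_simp
    nlinarith [hct, hs, hc, ht, sq_nonneg s, sq_nonneg t]
  refine csInf_le ⟨-(s ^ 2)⁻¹, ?_⟩ ⟨u₀, ⟨hu₀diff, hIl2, hIgrad, hIbp, hIbm⟩, hl2pos, hrval.symm⟩
  rintro r ⟨u, ⟨hdiff, hInt2, hIntG, hBp, hBm⟩, hl2u, hrdef⟩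
  -- Part B : the Rayleigh quotient is bounded below by -(s^2)⁻¹
  set L := ∫ p in S, u p ^ 2 with hLdef
  set G := ∫ p in S, ‖fderiv ℝ u p‖ ^ 2 with hGdef
  set D : ℝ × ℝ → ℝ := fun p => fderiv ℝ u p (1, 0) with hDdef
  have hDmeas : Measurable D := measurable_fderiv_apply_const ℝ u (1, 0)
  have hDle : ∀ p, D p ^ 2 ≤ ‖fderiv ℝ u p‖ ^ 2 := by
    intro p
    have h1 : |D p| ≤ ‖fderiv ℝ u p‖ := by
      have h := (fderiv ℝ u p).le_opNorm (1, 0)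
      have hn : ‖((1:ℝ), (0:ℝ))‖ = 1 := by
        rw [Prod.norm_def]
        simp
      rw [hn, mul_one] at h
      simpa [Real.norm_eq_abs] using h
    calc D p ^ 2 = |D p| ^ 2 := (sq_abs _).symm
      _ ≤ ‖fderiv ℝ u p‖ ^ 2 := pow_le_pow_left₀ (abs_nonneg _) h1 2
  have hIntD : IntegrableOn (fun p => D p ^ 2) S := by
    refine hIntG.mono' ((hDmeas.pow_const 2).aestronglyMeasurable.restrict) ?_
    refine ae_of_all _ fun p => ?_
    rw [Real.norm_eq_abs, abs_of_nonneg (sq_nonneg _)]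
    exact hDle p
  have hDG : ∫ p in S, D p ^ 2 ≤ G := integral_mono hIntD hIntG hDle
  set W : ℝ × ℝ → ℝ := fun p => s⁻¹ * u p ^ 2 + s * D p ^ 2 with hWdef
  have hIntW : IntegrableOn W S := (hInt2.const_mul _).add (hIntD.const_mul _)
  have hWnonneg : ∀ p, 0 ≤ W p := fun p => by positivity
  set F : ℝ × ℝ → ℝ := S.indicator W with hFdef
  have hFint : Integrable F := (integrable_indicator_iff hSmeas).2 hIntW
  have hFnonneg : ∀ p, 0 ≤ F p := fun p => Set.indicator_nonneg (fun q _ => hWnonneg q) p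
  have hFval : ∫ p, F p = s⁻¹ * L + s * ∫ p in S, D p ^ 2 := by
    rw [hFdef, integral_indicator hSmeas, hWdef]
    rw [integral_add (hInt2.const_mul _) (hIntD.const_mul _), integral_const_mul,
      integral_const_mul, ← hLdef]
  have hFint' : Integrable F (volume.prod volume) := by
    rwa [Measure.volume_eq_prod] at hFint
  have hF2int' : Integrable (S.indicator fun p : ℝ × ℝ => u p ^ 2) (volume.prod volume) := by
    rw [← Measure.volume_eq_prod]
    exact (integrable_indicator_iff hSmeas).2 hInt2
  have hFGint' : Integrable (S.indicator fun p : ℝ × ℝ => ‖fderiv ℝ u p‖ ^ 2)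
      (volume.prod volume) := by
    rw [← Measure.volume_eq_prod]
    exact (integrable_indicator_iff hSmeas).2 hIntG
  set Hf : ℝ → ℝ := fun y => ∫ x, F (x, y) with hHfdef
  have hHint : Integrable Hf := hFint'.integral_prod_right
  have hHnonneg : ∀ y, 0 ≤ Hf y := fun y => integral_nonneg fun x => hFnonneg _
  have hHval : ∫ y, Hf y = s⁻¹ * L + s * ∫ p in S, D p ^ 2 := by
    rw [← hFval]
    rw [show (∫ p, F p) = ∫ p, F p ∂(volume.prod volume) by rw [Measure.volume_eq_prod]]
    exact (integral_prod_symm F hFint').symm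
  have hind : ∀ (g : ℝ × ℝ → ℝ) (y : ℝ), (fun x => S.indicator g (x, y)) =
      (Ioi (|y| / t)).indicator (fun x => g (x, y)) := by
    intro g y; funext x
    by_cases hxy : (x, y) ∈ S
    · rw [Set.indicator_of_mem hxy, Set.indicator_of_mem
        (show x ∈ Ioi (|y| / t) by rw [← hslice_set y]; exact hxy)]
    · rw [Set.indicator_of_notMem hxy, Set.indicator_of_notMem]
      intro hx
      apply hxy
      have hx2 : x ∈ {x : ℝ | (x, y) ∈ S} := by rw [hslice_set y]; exact hx
      exact hx2
  have hkey : ∀ᵐ y : ℝ, u (|y| / t, y) ^ 2 ≤ Hf y := by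
    filter_upwards [hF2int'.prod_left_ae, hFGint'.prod_left_ae] with y h2s hGs
    have hfdiff : Differentiable ℝ (fun x : ℝ => u (x, y)) :=
      fun x => (hdiff (x, y)).comp x ((differentiableAt_id).prodMk (differentiableAt_const y))
    have hfderiv : ∀ x, deriv (fun x : ℝ => u (x, y)) x = D (x, y) := by
      intro x
      have h1 : HasDerivAt (fun x : ℝ => (x, y)) ((1:ℝ), (0:ℝ)) x :=
        (hasDerivAt_id x).prodMk (hasDerivAt_const x y)
      exact (((hdiff (x, y)).hasFDerivAt).comp_hasDerivAt x h1).deriv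
    have h2' : IntegrableOn (fun x => u (x, y) ^ 2) (Ioi (|y| / t)) := by
      have h := (hind (fun p => u p ^ 2) y) ▸ h2s
      rwa [integrable_indicator_iff measurableSet_Ioi] at h
    have hG' : IntegrableOn (fun x : ℝ => ‖fderiv ℝ u (x, y)‖ ^ 2) (Ioi (|y| / t)) := by
      have h := (hind (fun p => ‖fderiv ℝ u p‖ ^ 2) y) ▸ hGs
      rwa [integrable_indicator_iff measurableSet_Ioi] at h
    have hfd2 : IntegrableOn (fun x => deriv (fun x : ℝ => u (x, y)) x ^ 2) (Ioi (|y| / t)) := by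
      refine hG'.mono' (((measurable_deriv _).pow_const 2).aestronglyMeasurable.restrict) ?_
      refine ae_of_all _ fun x => ?_
      rw [Real.norm_eq_abs, abs_of_nonneg (sq_nonneg _), hfderiv]
      exact hDle (x, y)
    have htr := trace_one_dim hfdiff hs h2' hfd2
    have hHfy : Hf y = ∫ x in Ioi (|y| / t),
        (s⁻¹ * u (x, y) ^ 2 + s * deriv (fun x : ℝ => u (x, y)) x ^ 2) := by
      show (∫ x, F (x, y)) = _
      rw [hFdef, show (fun x => S.indicator W (x, y)) =
        (Ioi (|y| / t)).indicator (fun x => W (x, y)) from hind W y]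
      rw [integral_indicator measurableSet_Ioi]
      refine setIntegral_congr_fun measurableSet_Ioi fun x _ => ?_
      show W (x, y) = _
      rw [hWdef, hfderiv x]
    rw [hHfy]
    exact htr
  -- change of variables on the two rays
  have hP : ∫ x in Ioi (0:ℝ), u (x, x * t) ^ 2 = t⁻¹ * ∫ y in Ioi (0:ℝ), u (y / t, y) ^ 2 := by
    have h := integral_comp_mul_right_Ioi (fun y => u (y / t, y) ^ 2) 0 ht
    simp only [zero_mul, smul_eq_mul] at h
    rw [← h]
    refine setIntegral_congr_fun measurableSet_Ioi fun x _ => ?_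
    rw [mul_div_assoc, div_self ht.ne', mul_one]
  have hPint : IntegrableOn (fun y => u (y / t, y) ^ 2) (Ioi (0:ℝ)) := by
    have h0 : IntegrableOn (fun x : ℝ => u (x * t / t, x * t) ^ 2) (Ioi (0:ℝ)) := by
      refine hBp.congr (ae_of_all _ fun x => ?_)
      show u (x, x * t) ^ 2 = u (x * t / t, x * t) ^ 2
      rw [mul_div_assoc, div_self ht.ne', mul_one]
    have h := (integrableOn_Ioi_comp_mul_right_iff (fun y => u (y / t, y) ^ 2) 0 ht).1 h0
    simpa using h
  have hM : ∫ x in Ioi (0:ℝ), u (x, -(x * t)) ^ 2 = t⁻¹ * ∫ y in Iio (0:ℝ), u (-y / t, y) ^ 2 := by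
    have h := integral_comp_mul_right_Ioi (fun z => u (z / t, -z) ^ 2) 0 ht
    simp only [zero_mul, smul_eq_mul] at h
    have h3 := integral_comp_neg_Ioi (0:ℝ) (fun y => u (-y / t, y) ^ 2)
    simp only [neg_neg, neg_zero] at h3
    calc ∫ x in Ioi (0:ℝ), u (x, -(x * t)) ^ 2
        = ∫ x in Ioi (0:ℝ), u (x * t / t, -(x * t)) ^ 2 := by
          refine setIntegral_congr_fun measurableSet_Ioi fun x _ => ?_
          rw [mul_div_assoc, div_self ht.ne', mul_one]
      _ = t⁻¹ * ∫ z in Ioi (0:ℝ), u (z / t, -z) ^ 2 := h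
      _ = t⁻¹ * ∫ y in Iic (0:ℝ), u (-y / t, y) ^ 2 := by rw [h3]
      _ = t⁻¹ * ∫ y in Iio (0:ℝ), u (-y / t, y) ^ 2 := by
          rw [setIntegral_congr_set Iio_ae_eq_Iic]
  have hMint : IntegrableOn (fun y => u (-y / t, y) ^ 2) (Iio (0:ℝ)) := by
    have h1 : IntegrableOn (fun z => u (z / t, -z) ^ 2) (Ioi (0:ℝ)) := by
      have h0 : IntegrableOn (fun x : ℝ => u (x * t / t, -(x * t)) ^ 2) (Ioi (0:ℝ)) := by
        refine hBm.congr (ae_of_all _ fun x => ?_)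
        show u (x, -(x * t)) ^ 2 = u (x * t / t, -(x * t)) ^ 2
        rw [mul_div_assoc, div_self ht.ne', mul_one]
      have h := (integrableOn_Ioi_comp_mul_right_iff (fun z => u (z / t, -z) ^ 2) 0 ht).1 h0
      simpa using h
    have h2 : Integrable ((Ioi (0:ℝ)).indicator fun z => u (z / t, -z) ^ 2) :=
      (integrable_indicator_iff measurableSet_Ioi).2 h1
    have h3 := h2.comp_neg
    have h4 : ((Iio (0:ℝ)).indicator fun y => u (-y / t, y) ^ 2)
        = fun y => (Ioi (0:ℝ)).indicator (fun z => u (z / t, -z) ^ 2) (-y) := by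
      funext y
      by_cases hy : y < 0
      · rw [Set.indicator_of_mem (show y ∈ Iio (0:ℝ) from hy),
          Set.indicator_of_mem (show -y ∈ Ioi (0:ℝ) from neg_pos.2 hy)]
        rw [neg_neg]
      · rw [Set.indicator_of_notMem (show y ∉ Iio (0:ℝ) from fun h => hy h),
          Set.indicator_of_notMem (show -y ∉ Ioi (0:ℝ) from fun h => hy (neg_pos.1 h))]
    rw [← integrable_indicator_iff measurableSet_Iio, h4]
    exact h3
  have hP_le : ∫ y in Ioi (0:ℝ), u (y / t, y) ^ 2 ≤ ∫ y in Ioi (0:ℝ), Hf y := by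
    refine integral_mono_ae hPint hHint.integrableOn ?_
    refine (ae_restrict_iff' measurableSet_Ioi).2 ?_
    filter_upwards [hkey] with y hy hy0
    rw [show y / t = |y| / t by rw [abs_of_pos hy0]]
    exact hy
  have hM_le : ∫ y in Iio (0:ℝ), u (-y / t, y) ^ 2 ≤ ∫ y in Iio (0:ℝ), Hf y := by
    refine integral_mono_ae hMint hHint.integrableOn ?_
    refine (ae_restrict_iff' measurableSet_Iio).2 ?_
    filter_upwards [hkey] with y hy hy0
    rw [show -y / t = |y| / t by rw [abs_of_neg hy0]]
    exact hy
  have hsplit : (∫ y in Iio (0:ℝ), Hf y) + (∫ y in Ioi (0:ℝ), Hf y) = ∫ y, Hf y := by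
    rw [setIntegral_congr_set Iio_ae_eq_Iic]
    exact intervalIntegral.integral_Iic_add_Ioi hHint.integrableOn hHint.integrableOn
  have hsum : (∫ x in Ioi (0:ℝ), u (x, x * t) ^ 2) + (∫ x in Ioi (0:ℝ), u (x, -(x * t)) ^ 2)
      ≤ t⁻¹ * (s⁻¹ * L + s * G) := by
    have hDint_le : ∫ y, Hf y ≤ s⁻¹ * L + s * G := by
      rw [hHval]
      have h := mul_le_mul_of_nonneg_left hDG hs.le
      linarith
    rw [hP, hM, ← mul_add]
    refine mul_le_mul_of_nonneg_left ?_ (inv_nonneg.2 ht.le)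
    linarith [hP_le, hM_le, hsplit, hDint_le]
  have hbdry_le : c⁻¹ * ((∫ x in Ioi (0:ℝ), u (x, x * t) ^ 2) +
      ∫ x in Ioi (0:ℝ), u (x, -(x * t)) ^ 2) ≤ G + (s ^ 2)⁻¹ * L := by
    have h1 := mul_le_mul_of_nonneg_left hsum (inv_nonneg.2 hc.le)
    have h2 : c⁻¹ * (t⁻¹ * (s⁻¹ * L + s * G)) = G + (s ^ 2)⁻¹ * L := by
      have h3 : c⁻¹ * t⁻¹ = s⁻¹ := by rw [← mul_inv, hct]
      rw [← mul_assoc, h3]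
      field_simp
      ring
    linarith [h1]
  rw [hrdef, le_div_iff₀ hl2u]
  linarith [hbdry_le]



end RobinSectorAux

end RobinSectorAuxSec

/-- For a plane sector `S_θ` of opening `θ ∈ (0, π)`, the bottom `E(S_θ)` of the
spectrum of the Robin Laplacian on `S_θ` — the infimum of the Rayleigh quotient
`(‖∇u‖²_{L²(S_θ)} − ‖u‖²_{L²(∂S_θ)}) / ‖u‖²_{L²(S_θ)}` over nonzero `u ∈ H¹(S_θ)` —
satisfies `E(S_θ) ≤ −sin⁻²(θ/2)`, as can be shown by testing with
`u(x₁,x₂) = exp(−x₁ / sin(θ/2))` in the coordinates where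
`S_θ = {(x₁,x₂) : |x₂| < x₁ tan(θ/2)}`.

The boundary term `∫_{∂S_θ} u²` is written as the sum of the two line integrals along the
half-lines `x₂ = ± x₁ tan(θ/2)`, with arclength element `dx₁ / cos(θ/2)`. -/
theorem robin_sector_energy_upper_bound
    (θ : ℝ) (hθ : θ ∈ Set.Ioo 0 Real.pi) :
    let Sθ : Set (ℝ × ℝ) := {p : ℝ × ℝ | 0 < p.1 ∧ |p.2| < p.1 * Real.tan (θ / 2)}
    let gradSq : (ℝ × ℝ → ℝ) → ℝ := fun u => ∫ p in Sθ, ‖fderiv ℝ u p‖ ^ 2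
    let l2Sq : (ℝ × ℝ → ℝ) → ℝ := fun u => ∫ p in Sθ, (u p) ^ 2
    let bdrySq : (ℝ × ℝ → ℝ) → ℝ := fun u =>
      (Real.cos (θ / 2))⁻¹ *
        ((∫ x in Set.Ioi (0 : ℝ), (u (x, x * Real.tan (θ / 2))) ^ 2) +
          ∫ x in Set.Ioi (0 : ℝ), (u (x, -(x * Real.tan (θ / 2)))) ^ 2)
    let H1 : Set (ℝ × ℝ → ℝ) := {u | Differentiable ℝ u ∧
      IntegrableOn (fun p => (u p) ^ 2) Sθ ∧
      IntegrableOn (fun p => ‖fderiv ℝ u p‖ ^ 2) Sθ ∧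
      IntegrableOn (fun x => (u (x, x * Real.tan (θ / 2))) ^ 2) (Set.Ioi 0) ∧
      IntegrableOn (fun x => (u (x, -(x * Real.tan (θ / 2)))) ^ 2) (Set.Ioi 0)}
    sInf {r : ℝ | ∃ u ∈ H1, 0 < l2Sq u ∧ r = (gradSq u - bdrySq u) / l2Sq u} ≤
      -((Real.sin (θ / 2)) ^ 2)⁻¹ := by
  obtain ⟨hθ1, hθ2⟩ := hθ
  intro Sθ gradSq l2Sq bdrySq H1
  have hhalf1 : 0 < θ / 2 := by linarith
  have hhalf2 : θ / 2 < Real.pi / 2 := by linarith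
  have hs : 0 < Real.sin (θ / 2) :=
    Real.sin_pos_of_pos_of_lt_pi hhalf1 (by linarith [Real.pi_pos])
  have hc : 0 < Real.cos (θ / 2) := Real.cos_pos_of_mem_Ioo ⟨by linarith, hhalf2⟩
  have ht : 0 < Real.tan (θ / 2) := Real.tan_pos_of_pos_of_lt_pi_div_two hhalf1 hhalf2
  have hct : Real.cos (θ / 2) * Real.tan (θ / 2) = Real.sin (θ / 2) := by
    rw [Real.tan_eq_sin_div_cos]
    field_simp
  exact RobinSectorAux.robin_aux _ _ _ hs hc ht hct
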